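/- Let $\sigma > 0$, $\phi > 0$, $h_1^m > 0$, $\overline{h} > \sigma + 1$, and $\lambda_2 = \frac{h_1^m(\overline{h}-1)(\overline{h}-\sigma-1)}{L^2}\left[1+\sqrt{1+\frac{2\sigma\phi L^2\overline{h}}{(h_1^m)^2(\overline{h}-1)^2(\overline{h}-\sigma-1)^2}}\right]$ for $L > 0$. Then the condition $\frac{L\lambda_2}{\sqrt{2\sigma\phi}} \in \left(\frac{\overline{h}+\sqrt{\sigma+1}}{\sqrt{\sigma+1}+1}, \frac{\overline{h}}{\sqrt{\sigma+1}}\right)$ is equivalent to $L \in \frac{\sqrt{2}h_1^m}{\sqrt{\sigma\phi}}\left(\sqrt{\sigma+1}(\overline{h}-1),\, (\sqrt{\sigma+1}+1)(\overline{h}+\sqrt{\sigma+1})\right)$. -/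

import Mathlib

theorem zigzag_length_bounds (σ φ h1m hb L l2 : ℝ)
    (hσ : σ > 0) (hφ : φ > 0) (hh1m : h1m > 0) (hhb : hb > σ + 1) (hL : L > 0)
    (hl2 : l2 = h1m * (hb - 1) * (hb - σ - 1) / L ^ 2 *
      (1 + Real.sqrt (1 + 2 * σ * φ * L ^ 2 * hb /
        (h1m ^ 2 * (hb - 1) ^ 2 * (hb - σ - 1) ^ 2)))) :
    (L * l2 / Real.sqrt (2 * σ * φ) ∈
        Set.Ioo ((hb + Real.sqrt (σ + 1)) / (Real.sqrt (σ + 1) + 1))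
          (hb / Real.sqrt (σ + 1))) ↔
      L ∈ Set.Ioo
        (Real.sqrt 2 * h1m / Real.sqrt (σ * φ) * (Real.sqrt (σ + 1) * (hb - 1)))
        (Real.sqrt 2 * h1m / Real.sqrt (σ * φ) *
          ((Real.sqrt (σ + 1) + 1) * (hb + Real.sqrt (σ + 1)))) := by
  have hσφ : 0 < σ * φ := mul_pos hσ hφ
  have hhb1 : 1 < hb := by linarith
  have hbs1 : 0 < hb - σ - 1 := by linarith
  set s := Real.sqrt (σ + 1) with hs_def
  have hs0 : 0 < s := Real.sqrt_pos.mpr (by linarith)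
  have hs : s ^ 2 = σ + 1 := Real.sq_sqrt (by linarith)
  set r := Real.sqrt (σ * φ) with hr_def
  have hr0 : 0 < r := Real.sqrt_pos.mpr hσφ
  have hr2 : r ^ 2 = σ * φ := Real.sq_sqrt hσφ.le
  set q := Real.sqrt 2 with hq_def
  have hq0 : 0 < q := Real.sqrt_pos.mpr two_pos
  have hq2 : q ^ 2 = 2 := Real.sq_sqrt two_pos.le
  set A := h1m * (hb - 1) * (hb - σ - 1) with hA_def
  have hA : 0 < A := mul_pos (mul_pos hh1m (by linarith)) hbs1
  set D := 2 * σ * φ * L ^ 2 * hb / (h1m ^ 2 * (hb - 1) ^ 2 * (hb - σ - 1) ^ 2) with hD_def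
  have hD0 : 0 ≤ D := by rw [hD_def]; positivity
  set E := Real.sqrt (1 + D) with hE_def
  have hE0 : 0 ≤ E := Real.sqrt_nonneg _
  have hE : E ^ 2 = 1 + D := Real.sq_sqrt (by linarith)
  have hL2 : (0:ℝ) < L ^ 2 := by positivity
  have hden : h1m ^ 2 * (hb - 1) ^ 2 * (hb - σ - 1) ^ 2 ≠ 0 := by
    apply ne_of_gt
    exact mul_pos (mul_pos (pow_pos hh1m 2) (pow_pos (by linarith) 2)) (pow_pos hbs1 2)
  have hAD : A ^ 2 * D = 2 * σ * φ * L ^ 2 * hb := by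
    rw [hA_def, hD_def]
    rw [mul_div_assoc']
    exact div_eq_of_eq_mul hden (by ring)
  have hl2pos : 0 < l2 := by
    rw [hl2]
    exact mul_pos (div_pos hA hL2) (by linarith)
  have h1 : L ^ 2 * l2 = A * (1 + E) := by
    rw [hl2]; field_simp
  have h2 : (L ^ 2 * l2 - A) ^ 2 = A ^ 2 * (1 + D) := by
    have hae : L ^ 2 * l2 - A = A * E := by linear_combination h1
    rw [hae]
    linear_combination A ^ 2 * hE
  clear_value s r q A D E
  have hquad : L ^ 2 * l2 ^ 2 = 2 * A * l2 + 2 * (σ * φ) * hb := by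
    have h3 : L ^ 2 * (L ^ 2 * l2 ^ 2) = L ^ 2 * (2 * A * l2 + 2 * (σ * φ) * hb) := by
      linear_combination h2 + hAD
    exact mul_left_cancel₀ (ne_of_gt hL2) h3
  have hsqrt2σφ : Real.sqrt (2 * σ * φ) = q * r := by
    rw [show (2:ℝ) * σ * φ = 2 * (σ * φ) by ring, Real.sqrt_mul two_pos.le, ← hq_def, ← hr_def]
  rw [hsqrt2σφ]
  set t := L * l2 / (q * r) with ht_def
  have hqr0 : 0 < q * r := mul_pos hq0 hr0
  have htqr : t * (q * r) = L * l2 := div_mul_cancel₀ _ (ne_of_gt hqr0)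
  have ht0 : 0 < t := div_pos (mul_pos hL hl2pos) hqr0
  clear_value t
  have htq : (σ * φ) * t ^ 2 = A * l2 + (σ * φ) * hb := by
    have h3 : (t * (q * r)) ^ 2 = (L * l2) ^ 2 := by rw [htqr]
    linear_combination (1/2) * hquad + (1/2) * h3 - (t ^ 2 * r ^ 2 / 2) * hq2 - t ^ 2 * hr2
  have hrel : (σ * φ) * L * t ^ 2 = A * (t * (q * r)) + (σ * φ) * hb * L := by
    linear_combination L * htq - A * htqr
  -- key factorization identities
  have id1 : (σ * φ) * L * (hb - σ - 1) * t - A * q * r * s * t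
      = (σ * φ) * L * ((t + s) * (hb - t * s)) := by
    linear_combination s * hrel + (σ * φ * L * t) * hs
  have id2 : A * q * r * ((s + 1) * (hb + s)) * t - (σ * φ) * L * ((hb - 1) * (hb - σ - 1)) * t
      = (σ * φ) * L * ((t * (s + 1) - (hb + s)) * ((hb + s) * t + hb * (s + 1))) := by
    linear_combination (-((s + 1) * (hb + s))) * hrel - (σ * φ * L * t * (hb - 1)) * hs
  have hσφL : 0 < (σ * φ) * L := mul_pos hσφ hL
  -- upper bound on t  ↔  lower bound on L
  have iffU : t < hb / s ↔ q * h1m / r * (s * (hb - 1)) < L := by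
    rw [lt_div_iff₀ hs0]
    rw [show q * h1m / r * (s * (hb - 1)) = q * h1m * (s * (hb - 1)) / r from by ring,
      div_lt_iff₀ hr0]
    have hpos : 0 < (hb - σ - 1) * r := mul_pos hbs1 hr0
    have eL : q * h1m * (s * (hb - 1)) * ((hb - σ - 1) * r) = A * q * r * s := by
      rw [hA_def]; ring
    have eR : L * r * ((hb - σ - 1) * r) = (σ * φ) * L * (hb - σ - 1) := by
      linear_combination L * (hb - σ - 1) * hr2
    constructor
    · intro h1
      have hP : 0 < (σ * φ) * L * ((t + s) * (hb - t * s)) :=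
        mul_pos hσφL (mul_pos (by linarith) (by linarith))
      have h4 : A * q * r * s * t < (σ * φ) * L * (hb - σ - 1) * t := by linarith [id1]
      have h5 : A * q * r * s < (σ * φ) * L * (hb - σ - 1) :=
        lt_of_mul_lt_mul_right h4 ht0.le
      rw [← mul_lt_mul_iff_of_pos_right hpos, eL, eR]
      exact h5
    · intro h1
      have h5 : A * q * r * s < (σ * φ) * L * (hb - σ - 1) := by
        rw [← eL, ← eR]
        exact (mul_lt_mul_iff_of_pos_right hpos).mpr h1
      by_contra h
      push_neg at h
      have h4 := (mul_lt_mul_iff_of_pos_right ht0).mpr h5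
      have hnp : (σ * φ) * L * ((t + s) * (hb - t * s)) ≤ 0 :=
        mul_nonpos_of_nonneg_of_nonpos hσφL.le
          (mul_nonpos_of_nonneg_of_nonpos (by linarith) (by linarith))
      linarith [id1]
  -- lower bound on t  ↔  upper bound on L
  have iffL : (hb + s) / (s + 1) < t ↔ L < q * h1m / r * ((s + 1) * (hb + s)) := by
    rw [div_lt_iff₀ (by linarith : (0:ℝ) < s + 1)]
    rw [show q * h1m / r * ((s + 1) * (hb + s)) = q * h1m * ((s + 1) * (hb + s)) / r from by ring,
      lt_div_iff₀ hr0]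
    have hpos : 0 < (hb - 1) * (hb - σ - 1) * r := mul_pos (mul_pos (by linarith) hbs1) hr0
    have eL : L * r * ((hb - 1) * (hb - σ - 1) * r) = (σ * φ) * L * ((hb - 1) * (hb - σ - 1)) := by
      linear_combination L * ((hb - 1) * (hb - σ - 1)) * hr2
    have eR : q * h1m * ((s + 1) * (hb + s)) * ((hb - 1) * (hb - σ - 1) * r)
        = A * q * r * ((s + 1) * (hb + s)) := by
      rw [hA_def]; ring
    have hpos2 : 0 < (hb + s) * t + hb * (s + 1) :=
      add_pos (mul_pos (by linarith) ht0) (mul_pos (by linarith) (by linarith))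
    constructor
    · intro h1
      have hP : 0 < (σ * φ) * L * ((t * (s + 1) - (hb + s)) * ((hb + s) * t + hb * (s + 1))) :=
        mul_pos hσφL (mul_pos (by linarith) hpos2)
      have h4 : (σ * φ) * L * ((hb - 1) * (hb - σ - 1)) * t
          < A * q * r * ((s + 1) * (hb + s)) * t := by linarith [id2]
      have h5 := lt_of_mul_lt_mul_right h4 ht0.le
      rw [← mul_lt_mul_iff_of_pos_right hpos, eL, eR]
      exact h5
    · intro h1
      have h5 : (σ * φ) * L * ((hb - 1) * (hb - σ - 1)) < A * q * r * ((s + 1) * (hb + s)) := by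
        rw [← eL, ← eR]
        exact (mul_lt_mul_iff_of_pos_right hpos).mpr h1
      by_contra h
      push_neg at h
      have h4 := (mul_lt_mul_iff_of_pos_right ht0).mpr h5
      have hnp : (σ * φ) * L * ((t * (s + 1) - (hb + s)) * ((hb + s) * t + hb * (s + 1))) ≤ 0 :=
        mul_nonpos_of_nonneg_of_nonpos hσφL.le
          (mul_nonpos_of_nonpos_of_nonneg (by linarith) hpos2.le)
      linarith [id2]
  rw [Set.mem_Ioo, Set.mem_Ioo]
  constructor
  · rintro ⟨ha, hbb⟩
    exact ⟨iffU.mp hbb, iffL.mp ha⟩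
  · rintro ⟨h1, h2⟩
    exact ⟨iffL.mpr h2, iffU.mpr h1⟩
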